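/- Let K ⊆ ℤ^n be a nonempty set invariant under translation by 𝟙_n and closed under coordinatewise min and max (i.e., x, y ∈ K implies x ∧ y ∈ K and x ∨ y ∈ K). Then K = { x ∈ ℤ^n : x_i - x_j ≤ c_{ij} for all i,j } where c_{ij} := sup_{q ∈ K} (q_i - q_j) ∈ ℤ ∪ {∞}. -/

import Mathlib

/-- A nonempty subset of ℤ^n which is invariant under translation by the all-ones
vector and closed under coordinatewise min and max equals the set of points obeying
the difference constraints x_i - x_j ≤ c_{ij}, where c_{ij} = sup_{q ∈ K} (q_i - q_j)
in ℤ ∪ {∞}. -/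
theorem stmt5 (n : ℕ) (K : Set (Fin n → ℤ)) (hne : K.Nonempty)
    (htrans : ∀ x : Fin n → ℤ, x ∈ K ↔ x + (fun _ => 1) ∈ K)
    (hinf : ∀ x ∈ K, ∀ y ∈ K, x ⊓ y ∈ K)
    (hsup : ∀ x ∈ K, ∀ y ∈ K, x ⊔ y ∈ K)
    (c : Fin n → Fin n → WithTop ℤ)
    (hc : ∀ i j : Fin n,
      IsLUB ((fun q : Fin n → ℤ => ((q i - q j : ℤ) : WithTop ℤ)) '' K) (c i j)) :
    K = {x | ∀ i j : Fin n, ((x i - x j : ℤ) : WithTop ℤ) ≤ c i j} := by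
  ext x
  simp only [Set.mem_setOf_eq]
  constructor
  · intro hx i j
    exact (hc i j).1 ⟨x, hx, rfl⟩
  · intro hx
    rcases Nat.eq_zero_or_pos n with h0 | hpos
    · obtain ⟨q, hq⟩ := hne
      have hxq : x = q := by
        funext i
        exact absurd i.isLt (by omega)
      rw [hxq]; exact hq
    -- translation closure for all integers
    have htr : ∀ k : ℤ, ∀ y ∈ K, (y + fun _ => k) ∈ K := by
      intro k
      induction k using Int.induction_on with
      | zero =>
        intro y hy
        convert hy using 1
        funext t; simp
      | succ m ih =>
        intro y hy
        have h1 := (htrans _).1 (ih y hy)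
        convert h1 using 1
        funext t; simp; ring
      | pred m ih =>
        intro y hy
        apply (htrans _).2
        have h1 := ih y hy
        convert h1 using 1
        funext t; simp; ring
    -- for each pair, a witness almost achieving the sup
    have hex : ∀ i j : Fin n, ∃ q ∈ K, x i - x j ≤ q i - q j := by
      intro i j
      by_contra h
      push_neg at h
      have hub : ((x i - x j - 1 : ℤ) : WithTop ℤ) ∈
          upperBounds ((fun q : Fin n → ℤ => ((q i - q j : ℤ) : WithTop ℤ)) '' K) := by
        rintro _ ⟨q, hq, rfl⟩
        have := h q hq
        show ((q i - q j : ℤ) : WithTop ℤ) ≤ ((x i - x j - 1 : ℤ) : WithTop ℤ)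
        exact_mod_cast (by linarith : q i - q j ≤ x i - x j - 1)
      have h2 : c i j ≤ ((x i - x j - 1 : ℤ) : WithTop ℤ) := (hc i j).2 hub
      have h3 : ((x i - x j : ℤ) : WithTop ℤ) ≤ ((x i - x j - 1 : ℤ) : WithTop ℤ) :=
        le_trans (hx i j) h2
      have h4 : (x i - x j : ℤ) ≤ x i - x j - 1 := by exact_mod_cast h3
      linarith
    choose Q hQK hQle using hex
    haveI : Nonempty (Fin n) := Fin.pos_iff_nonempty.mp hpos
    have hn : (Finset.univ : Finset (Fin n)).Nonempty := Finset.univ_nonempty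
    set q' : Fin n → Fin n → (Fin n → ℤ) :=
      fun i j => Q i j + fun _ => (x i - Q i j i) with hq'
    have hq'K : ∀ i j, q' i j ∈ K := fun i j => htr _ _ (hQK i j)
    set z : Fin n → (Fin n → ℤ) := fun i => Finset.univ.inf' hn (fun j => q' i j) with hz
    have hzK : ∀ i, z i ∈ K := by
      intro i
      exact Finset.inf'_mem K hinf _ hn _ (fun j _ => hq'K i j)
    have hzle : ∀ i, z i ≤ x := by
      intro i j
      have h1 : z i ≤ q' i j := Finset.inf'_le _ (Finset.mem_univ j)
      have h2 := h1 j
      have h3 := hQle i j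
      simp only [hq', Pi.add_apply] at h2
      calc z i j ≤ Q i j j + (x i - Q i j i) := h2
        _ ≤ x j := by linarith
    have hzi : ∀ i, z i i = x i := by
      intro i
      show (Finset.univ.inf' hn fun j => q' i j) i = x i
      rw [Finset.inf'_apply]
      have : (fun j => q' i j i) = fun _ => x i := by
        funext j; simp [hq']
      rw [this, Finset.inf'_const]
    have hxeq : x = Finset.univ.sup' hn z := by
      apply le_antisymm
      · intro i
        rw [Finset.sup'_apply]
        calc x i = z i i := (hzi i).symm
          _ ≤ _ := Finset.le_sup' (fun k => z k i) (Finset.mem_univ i)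
      · exact Finset.sup'_le _ _ (fun i _ => hzle i)
    rw [hxeq]
    exact Finset.sup'_mem K hsup _ hn _ (fun i _ => hzK i)
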